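/- Let F : h^m → h^n be a normally analytic germ. Then the differential map (u,v) ↦ dF(u)v, viewed as a germ h^m × h^m → h^n, is normally analytic, and its majorant satisfies (dF(|u|)|v|)̲ ≤ dF̲(|u|)|v| componentwise. -/

import Mathlib

open scoped ENNReal NNReal BigOperators ComplexConjugate

noncomputable section

/-- A pair of multi-indices `(α, β)` in `Z_+^∞` with finite support. -/
abbrev MIdx := (ℕ →₀ ℕ) × (ℕ →₀ ℕ)

/-- Total degree `|α| + |β|` of a pair of multi-indices. -/
def mdeg (p : MIdx) : ℕ := (p.1.sum fun _ n => n) + (p.2.sum fun _ n => n)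

/-- `u^α = ∏ u_j^{α_j}` for a complex sequence `u`. -/
def cpow (u : ℕ → ℂ) (α : ℕ →₀ ℕ) : ℂ := α.prod fun j n => u j ^ n

/-- `v^α = ∏ v_j^{α_j}` for a nonnegative (extended real) sequence `v`. -/
def epow (v : ℕ → ℝ≥0∞) (α : ℕ →₀ ℕ) : ℝ≥0∞ := α.prod fun j n => v j ^ n

/-- A map of sequence spaces given by a power series `F^j(u) = Σ_{α,β} A^j_{αβ} u^α ū^β`. -/
structure PSMap where
  coeff : ℕ → MIdx → ℂ

/-- The value `F^j(u)` of the power series map. -/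
def PSMap.app (F : PSMap) (u : ℕ → ℂ) (j : ℕ) : ℂ :=
  ∑' p : MIdx, F.coeff j p * cpow u p.1 * cpow (fun i => conj (u i)) p.2

/-- The majorant series `F̲^j(v) = Σ |A^j_{αβ}| v^{α+β}` evaluated at a nonnegative sequence. -/
def PSMap.maj (F : PSMap) (v : ℕ → ℝ≥0∞) (j : ℕ) : ℝ≥0∞ :=
  ∑' p : MIdx, (‖F.coeff j p‖₊ : ℝ≥0∞) * epow v (p.1 + p.2)

/-- The `N`-homogeneous part `F̲_N` of the majorant series. -/
def PSMap.majN (F : PSMap) (N : ℕ) (v : ℕ → ℝ≥0∞) (j : ℕ) : ℝ≥0∞ :=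
  ∑' p : MIdx, if mdeg p = N then (‖F.coeff j p‖₊ : ℝ≥0∞) * epow v (p.1 + p.2) else 0

/-- The (extended-real valued) norm of the weighted `l²` space `h^m`; sequences are indexed by
`j ≥ 1`, here represented by `j ∈ ℕ` with weight `(j+1)^{2m}`. -/
def hnorm (m : ℝ) (v : ℕ → ℝ≥0∞) : ℝ≥0∞ :=
  (∑' j : ℕ, ((j : ℝ≥0∞) + 1) ^ (2 * m) * v j ^ 2) ^ ((1 : ℝ) / 2)

/-- The sequence of moduli `|u| = (|u_1|, |u_2|, …)`. -/
def cabs (u : ℕ → ℂ) : ℕ → ℝ≥0∞ := fun j => (‖u j‖₊ : ℝ≥0∞)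

/-- A power-series germ `F : h^m → h^n`, `F(0) = 0`, is *normally analytic* if its majorant
`F̲` defines a real-analytic germ `h_R^m → h_R^n`, i.e. each `N`-homogeneous part satisfies
`‖F̲_N(v)‖_n ≤ C R^N ‖v‖_m^N`. -/
def NormAnalytic (m n : ℝ) (F : PSMap) : Prop :=
  (∀ j, F.coeff j (0, 0) = 0) ∧
  ∃ C R : ℝ≥0∞, 0 < C ∧ C < ∞ ∧ 0 < R ∧ R < ∞ ∧
    ∀ (N : ℕ) (v : ℕ → ℝ≥0∞), hnorm n (F.majN N v) ≤ C * R ^ N * hnorm m v ^ N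

/-- The differential `dF^j(u)(v) = Σ_{α,β} Σ_r A^j_{αβ} (α_r v_r u^{α-1_r} ū^β
+ β_r v̄_r u^α ū^{β-1_r})`. -/
def PSMap.dapp (F : PSMap) (u v : ℕ → ℂ) (j : ℕ) : ℂ :=
  ∑' (p : MIdx) (r : ℕ),
    F.coeff j p *
      ((p.1 r : ℂ) * v r * cpow u (p.1 - Finsupp.single r 1) * cpow (fun i => conj (u i)) p.2 +
        (p.2 r : ℂ) * conj (v r) * cpow u p.1 *
          cpow (fun i => conj (u i)) (p.2 - Finsupp.single r 1))

/-- The differential of the majorant series, `dF̲(w)x = Σ_{α,β} Σ_r |A^j_{αβ}|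
(α_r + β_r) x_r w^{α+β-1_r}`. -/
def PSMap.dmaj (F : PSMap) (w x : ℕ → ℝ≥0∞) (j : ℕ) : ℝ≥0∞ :=
  ∑' (p : MIdx) (r : ℕ),
    (‖F.coeff j p‖₊ : ℝ≥0∞) * ((p.1 r : ℝ≥0∞) + (p.2 r : ℝ≥0∞)) * x r *
      epow w (p.1 + p.2 - Finsupp.single r 1)

/-- The part of `dF̲(w)x` coming from the terms of total degree `N` of `F`. -/
def PSMap.dmajN (F : PSMap) (N : ℕ) (w x : ℕ → ℝ≥0∞) (j : ℕ) : ℝ≥0∞ :=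
  ∑' (p : MIdx) (r : ℕ),
    if mdeg p = N then
      (‖F.coeff j p‖₊ : ℝ≥0∞) * ((p.1 r : ℝ≥0∞) + (p.2 r : ℝ≥0∞)) * x r *
        epow w (p.1 + p.2 - Finsupp.single r 1)
    else 0


/-! ### Auxiliary lemmas -/

/-- degree of a multi-index -/
def fdeg (γ : ℕ →₀ ℕ) : ℕ := γ.sum fun _ n => n

lemma fdeg_add (α β : ℕ →₀ ℕ) : fdeg (α + β) = fdeg α + fdeg β := by
  unfold fdeg; exact Finsupp.sum_add_index' (fun _ => rfl) (fun _ _ _ => rfl)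

lemma fdeg_single (a k : ℕ) : fdeg (Finsupp.single a k) = k := by
  unfold fdeg; exact Finsupp.sum_single_index rfl

lemma mdeg_eq_fdeg (p : MIdx) : mdeg p = fdeg (p.1 + p.2) := by
  rw [fdeg_add]; rfl

lemma le_fdeg (γ : ℕ →₀ ℕ) (a : ℕ) : γ a ≤ fdeg γ := by
  by_cases h : a ∈ γ.support
  · exact Finset.single_le_sum (f := fun i => γ i) (fun _ _ => Nat.zero_le _) h
  · simp [Finsupp.notMem_support_iff.mp h]

lemma pair_le_fdeg (γ : ℕ →₀ ℕ) {a b : ℕ} (hab : a ≠ b) : γ a + γ b ≤ fdeg γ := by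
  have h1 : ∑ t ∈ ({a, b} : Finset ℕ), γ t = γ a + γ b := Finset.sum_pair hab
  have h2 : fdeg γ = ∑ t ∈ γ.support ∪ {a, b}, γ t := by
    unfold fdeg Finsupp.sum
    exact Finset.sum_subset Finset.subset_union_left
      (fun x _ hx => Finsupp.notMem_support_iff.mp hx)
  rw [← h1, h2]
  exact Finset.sum_le_sum_of_subset Finset.subset_union_right

lemma epow_zero (v : ℕ → ℝ≥0∞) : epow v 0 = 1 := Finsupp.prod_zero_index

lemma epow_add (v : ℕ → ℝ≥0∞) (α β : ℕ →₀ ℕ) :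
    epow v (α + β) = epow v α * epow v β := by
  unfold epow
  exact Finsupp.prod_add_index' (fun a => pow_zero _) (fun a n k => pow_add _ _ _)

lemma epow_single (v : ℕ → ℝ≥0∞) (a k : ℕ) :
    epow v (Finsupp.single a k) = v a ^ k :=
  Finsupp.prod_single_index (pow_zero _)

lemma epow_mono (v w : ℕ → ℝ≥0∞) (h : ∀ j, v j ≤ w j) (α : ℕ →₀ ℕ) :
    epow v α ≤ epow w α :=
  Finset.prod_le_prod' fun i _ => pow_le_pow_left' (h i) _

lemma epow_eq_zero (v : ℕ → ℝ≥0∞) (hv : ∀ j, v j = 0) {α : ℕ →₀ ℕ} (hα : α ≠ 0) :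
    epow v α = 0 := by
  obtain ⟨a, ha⟩ := Finsupp.support_nonempty_iff.mpr hα
  refine Finset.prod_eq_zero ha ?_
  show v a ^ α a = 0
  rw [hv a]
  exact zero_pow (Finsupp.mem_support_iff.mp ha)

/-- binomial-type inequality in `ℝ≥0∞` -/
lemma binom_aux (k : ℕ) (a b : ℝ≥0∞) :
    a ^ (k + 1) + (k + 1 : ℕ) * b * a ^ k ≤ (a + b) ^ (k + 1) := by
  induction k with
  | zero => simp [two_mul]
  | succ k IH =>
    have h1 : (a + b) ^ (k + 2) = (a + b) * (a + b) ^ (k + 1) := by ring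
    have h2 : (a + b) * (a ^ (k + 1) + (k + 1 : ℕ) * b * a ^ k)
        = (a ^ (k + 2) + (k + 2 : ℕ) * b * a ^ (k + 1)) + (k + 1 : ℕ) * b ^ 2 * a ^ k := by
      push_cast; ring
    calc a ^ (k + 2) + (k + 2 : ℕ) * b * a ^ (k + 1)
        ≤ (a ^ (k + 2) + (k + 2 : ℕ) * b * a ^ (k + 1)) + (k + 1 : ℕ) * b ^ 2 * a ^ k :=
          self_le_add_right _ _
      _ = (a + b) * (a ^ (k + 1) + (k + 1 : ℕ) * b * a ^ k) := h2.symm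
      _ ≤ (a + b) * (a + b) ^ (k + 1) := mul_le_mul_right IH _
      _ = (a + b) ^ (k + 2) := h1.symm

/-- key combinatorial inequality (finite-sum version) -/
lemma key_fsum_le (w x : ℕ → ℝ≥0∞) (γ : ℕ →₀ ℕ) :
    ∑ r ∈ γ.support, (γ r : ℝ≥0∞) * x r * epow w (γ - Finsupp.single r 1)
      ≤ epow (fun i => w i + x i) γ := by
  induction γ using Finsupp.induction with
  | zero => simp [epow]
  | single_add a b δ ha hb IH =>
    have hδa : δ a = 0 := Finsupp.notMem_support_iff.mp ha
    have hb1 : ∃ k, b = k + 1 := ⟨b - 1, (Nat.succ_pred_eq_of_pos (Nat.pos_of_ne_zero hb)).symm⟩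
    obtain ⟨k, rfl⟩ := hb1
    have hsupp : (Finsupp.single a (k + 1) + δ).support = insert a δ.support := by
      rw [Finsupp.support_add_eq, Finsupp.support_single_ne_zero a hb]
      · rw [← Finset.insert_eq]
      · rw [Finsupp.support_single_ne_zero a hb]
        simpa using ha
    have hγa : (Finsupp.single a (k + 1) + δ) a = k + 1 := by
      simp [hδa]
    have hI2 : (Finsupp.single a (k + 1) + δ) - Finsupp.single a 1
        = Finsupp.single a k + δ := by
      ext s
      simp only [Finsupp.tsub_apply, Finsupp.sub_apply, Finsupp.add_apply, Finsupp.single_apply]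
      by_cases hs : a = s <;> simp [hs, hδa]
    have hterm : ∀ r ∈ δ.support,
        (((Finsupp.single a (k + 1) + δ) r : ℕ) : ℝ≥0∞) * x r *
            epow w (Finsupp.single a (k + 1) + δ - Finsupp.single r 1)
          = w a ^ (k + 1) * ((δ r : ℝ≥0∞) * x r * epow w (δ - Finsupp.single r 1)) := by
      intro r hr
      have hra : r ≠ a := fun h => ha (h ▸ hr)
      have h1 : (Finsupp.single a (k + 1) + δ) r = δ r := by
        simp [Finsupp.single_apply, (Ne.symm hra : a ≠ r)]
      have h2 : Finsupp.single a (k + 1) + δ - Finsupp.single r 1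
          = Finsupp.single a (k + 1) + (δ - Finsupp.single r 1) := by
        ext s
        simp only [Finsupp.tsub_apply, Finsupp.sub_apply, Finsupp.add_apply, Finsupp.single_apply]
        by_cases hs1 : a = s <;> by_cases hs2 : r = s <;>
          simp [hs1, hs2] <;> omega
      rw [h1, h2, epow_add, epow_single]
      ring
    rw [hsupp, Finset.sum_insert ha, Finset.sum_congr rfl hterm, ← Finset.mul_sum,
      hγa, hI2, epow_add, epow_single, epow_add, epow_single]
    have hmono : epow w δ ≤ epow (fun i => w i + x i) δ :=
      epow_mono _ _ (fun j => le_self_add) δ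
    refine le_trans (add_le_add (mul_le_mul_right (mul_le_mul_right hmono _) _)
      (mul_le_mul_right IH _)) ?_
    refine le_trans (le_of_eq ?_) (mul_le_mul_left (binom_aux k (w a) (x a)) _)
    push_cast; ring

/-- key combinatorial inequality -/
lemma key_sum_le (w x : ℕ → ℝ≥0∞) (γ : ℕ →₀ ℕ) :
    ∑' r : ℕ, (γ r : ℝ≥0∞) * x r * epow w (γ - Finsupp.single r 1)
      ≤ epow (fun i => w i + x i) γ := by
  have hts : ∑' r : ℕ, (γ r : ℝ≥0∞) * x r * epow w (γ - Finsupp.single r 1)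
      = ∑ r ∈ γ.support, (γ r : ℝ≥0∞) * x r * epow w (γ - Finsupp.single r 1) := by
    refine tsum_eq_sum fun r hr => ?_
    simp [Finsupp.notMem_support_iff.mp hr]
  rw [hts]
  exact key_fsum_le w x γ

/-! ### `hnorm` lemmas -/

lemma hnorm_zero (m : ℝ) (v : ℕ → ℝ≥0∞) (hv : ∀ j, v j = 0) : hnorm m v = 0 := by
  have : ∀ j : ℕ, ((j : ℝ≥0∞) + 1) ^ (2 * m) * v j ^ 2 = 0 := by
    intro j; rw [hv j]; simp
  unfold hnorm
  rw [tsum_congr this, tsum_zero, ENNReal.zero_rpow_of_pos (by norm_num)]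

lemma hnorm_eq_zero (m : ℝ) (v : ℕ → ℝ≥0∞) (h : hnorm m v = 0) : ∀ j, v j = 0 := by
  unfold hnorm at h
  intro j
  rcases ENNReal.rpow_eq_zero_iff.mp h with ⟨h0, _⟩ | ⟨_, hlt⟩
  · have := ENNReal.tsum_eq_zero.mp h0 j
    rcases mul_eq_zero.mp this with h1 | h2
    · exfalso
      rcases ENNReal.rpow_eq_zero_iff.mp h1 with ⟨hb, _⟩ | ⟨hb, _⟩
      · exact (lt_of_lt_of_le zero_lt_one le_add_self).ne' hb
      · exact (ENNReal.add_lt_top.mpr ⟨ENNReal.natCast_lt_top j, ENNReal.one_lt_top⟩).ne hb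
    · exact pow_eq_zero_iff (two_ne_zero) |>.mp h2
  · norm_num at hlt

lemma hnorm_smul (m : ℝ) (t : ℝ≥0∞) (v : ℕ → ℝ≥0∞) :
    hnorm m (fun j => t * v j) = t * hnorm m v := by
  unfold hnorm
  have h1 : ∀ j : ℕ, ((j : ℝ≥0∞) + 1) ^ (2 * m) * (t * v j) ^ 2
      = t ^ 2 * (((j : ℝ≥0∞) + 1) ^ (2 * m) * v j ^ 2) := by intro j; ring
  rw [tsum_congr h1, ENNReal.tsum_mul_left,
    ENNReal.mul_rpow_of_nonneg _ _ (by norm_num : (0:ℝ) ≤ 1/2)]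
  congr 1
  rw [← ENNReal.rpow_natCast t 2, ← ENNReal.rpow_mul]
  norm_num

lemma hnorm_mono (m : ℝ) (v w : ℕ → ℝ≥0∞) (h : ∀ j, v j ≤ w j) :
    hnorm m v ≤ hnorm m w := by
  unfold hnorm
  refine ENNReal.rpow_le_rpow ?_ (by norm_num)
  exact ENNReal.tsum_le_tsum fun j => mul_le_mul_right (pow_le_pow_left' (h j) 2) _

lemma hnorm_add_le (m : ℝ) (v w : ℕ → ℝ≥0∞) :
    hnorm m (fun j => v j + w j) ≤ hnorm m v + hnorm m w := by
  unfold hnorm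
  set a : ℕ → ℝ≥0∞ := fun j => ((j : ℝ≥0∞) + 1) ^ (2 * m) with ha
  set f : ℕ → ℝ≥0∞ := fun j => a j ^ ((1 : ℝ) / 2) * v j with hf
  set g : ℕ → ℝ≥0∞ := fun j => a j ^ ((1 : ℝ) / 2) * w j with hg
  have hsq : ∀ (c : ℕ → ℝ≥0∞) (j : ℕ), (a j ^ ((1:ℝ)/2) * c j) ^ (2:ℝ) = a j * c j ^ 2 := by
    intro c j
    rw [ENNReal.mul_rpow_of_nonneg _ _ (by norm_num : (0:ℝ) ≤ 2), ← ENNReal.rpow_mul,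
      show (1:ℝ)/2 * 2 = 1 by norm_num, ENNReal.rpow_one,
      show (2:ℝ) = ((2:ℕ):ℝ) by norm_num, ENNReal.rpow_natCast]
  have hkey : ∀ j : ℕ, a j * (v j + w j) ^ 2 = (f + g) j ^ (2:ℝ) := by
    intro j
    have : (f + g) j = a j ^ ((1:ℝ)/2) * (v j + w j) := by
      simp only [hf, hg, Pi.add_apply]; ring
    rw [this, hsq (fun j => v j + w j) j]
  have hfm : AEMeasurable f MeasureTheory.Measure.count := (measurable_of_countable f).aemeasurable
  have hgm : AEMeasurable g MeasureTheory.Measure.count := (measurable_of_countable g).aemeasurable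
  have H := ENNReal.lintegral_Lp_add_le hfm hgm (by norm_num : (1:ℝ) ≤ 2)
  rw [MeasureTheory.lintegral_count, MeasureTheory.lintegral_count,
    MeasureTheory.lintegral_count] at H
  have e1 : ∑' j : ℕ, a j * (v j + w j) ^ 2 = ∑' j : ℕ, (f + g) j ^ (2:ℝ) := tsum_congr hkey
  have e2 : ∑' j : ℕ, a j * v j ^ 2 = ∑' j : ℕ, f j ^ (2:ℝ) := tsum_congr fun j => (hsq v j).symm
  have e3 : ∑' j : ℕ, a j * w j ^ 2 = ∑' j : ℕ, g j ^ (2:ℝ) := tsum_congr fun j => (hsq w j).symm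
  rw [e1, e2, e3]
  convert H using 3 <;> norm_num

/-! ### norm of complex series -/

lemma enorm_tsum_le {ι : Type*} (f : ι → ℂ) :
    (‖∑' i, f i‖₊ : ℝ≥0∞) ≤ ∑' i, (‖f i‖₊ : ℝ≥0∞) := by
  by_cases h : Summable fun i => ‖f i‖₊
  · calc (‖∑' i, f i‖₊ : ℝ≥0∞) ≤ ((∑' i, ‖f i‖₊ : ℝ≥0) : ℝ≥0∞) :=
        ENNReal.coe_le_coe.2 (nnnorm_tsum_le h)
      _ = _ := ENNReal.coe_tsum h
  · have : ∑' i, (‖f i‖₊ : ℝ≥0∞) = ⊤ := by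
      by_contra hne; exact h (ENNReal.tsum_coe_ne_top_iff_summable.mp hne)
    rw [this]; exact le_top

lemma nnnorm_cpow (u : ℕ → ℂ) (α : ℕ →₀ ℕ) : (‖cpow u α‖₊ : ℝ≥0∞) = epow (cabs u) α := by
  unfold cpow epow cabs Finsupp.prod
  rw [nnnorm_prod, ENNReal.coe_finset_prod]
  exact Finset.prod_congr rfl fun j _ => by rw [nnnorm_pow, ENNReal.coe_pow]

lemma cabs_conj (u : ℕ → ℂ) : cabs (fun i => conj (u i)) = cabs u := by
  funext j
  simp [cabs]

lemma sub_single_add (α β : ℕ →₀ ℕ) (r : ℕ) (h : α r ≠ 0) :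
    (α - Finsupp.single r 1) + β = α + β - Finsupp.single r 1 := by
  ext s
  simp only [Finsupp.tsub_apply, Finsupp.sub_apply, Finsupp.add_apply, Finsupp.single_apply]
  by_cases hs : r = s
  · subst hs; simp; omega
  · simp [hs]

/-! ### `dmajN` lemmas -/

lemma dmajN_N_zero (F : PSMap) (w x : ℕ → ℝ≥0∞) (j : ℕ) : F.dmajN 0 w x j = 0 := by
  unfold PSMap.dmajN
  rw [ENNReal.tsum_eq_zero]
  intro p
  rw [ENNReal.tsum_eq_zero]
  intro r
  by_cases h : mdeg p = 0
  · rw [if_pos h]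
    have h0 : fdeg p.1 = 0 ∧ fdeg p.2 = 0 := by
      unfold mdeg at h; unfold fdeg; omega
    have h1 : p.1 r = 0 := Nat.le_zero.mp (le_trans (le_fdeg p.1 r) h0.1.le)
    have h2 : p.2 r = 0 := Nat.le_zero.mp (le_trans (le_fdeg p.2 r) h0.2.le)
    simp [h1, h2]
  · rw [if_neg h]

lemma dmajN_x_zero (F : PSMap) (N : ℕ) (w x : ℕ → ℝ≥0∞) (j : ℕ) (hx : ∀ r, x r = 0) :
    F.dmajN N w x j = 0 := by
  unfold PSMap.dmajN
  rw [ENNReal.tsum_eq_zero]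
  intro p
  rw [ENNReal.tsum_eq_zero]
  intro r
  by_cases h : mdeg p = N
  · rw [if_pos h, hx r]; simp
  · rw [if_neg h]

lemma dmajN_w_zero (F : PSMap) (N : ℕ) (w x : ℕ → ℝ≥0∞) (j : ℕ) (hw : ∀ i, w i = 0)
    (hN : 2 ≤ N) : F.dmajN N w x j = 0 := by
  unfold PSMap.dmajN
  rw [ENNReal.tsum_eq_zero]
  intro p
  rw [ENNReal.tsum_eq_zero]
  intro r
  by_cases h : mdeg p = N
  · rw [if_pos h]
    by_cases h2 : p.1 r = 0 ∧ p.2 r = 0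
    · simp [h2.1, h2.2]
    · have hδ : p.1 + p.2 - Finsupp.single r 1 ≠ 0 := by
        intro h0
        have hle : ∀ s, (p.1 + p.2) s ≤ Finsupp.single r 1 s := by
          intro s
          have := Finsupp.ext_iff.mp h0 s
          simp only [Finsupp.tsub_apply, Finsupp.sub_apply, Finsupp.coe_zero, Pi.zero_apply] at this
          omega
        have heq : p.1 + p.2 = Finsupp.single r ((p.1 + p.2) r) := by
          ext s
          by_cases hs : r = s
          · subst hs; simp
          · have := hle s
            simp only [Finsupp.single_apply, hs, if_neg, if_false] at this ⊢
            omega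
        have hd : fdeg (p.1 + p.2) ≤ 1 := by
          rw [heq, fdeg_single]
          have := hle r
          simpa using this
        rw [← mdeg_eq_fdeg, h] at hd
        omega
      rw [epow_eq_zero w hw hδ]
      simp
  · rw [if_neg h]

lemma dmajN_le_majN (F : PSMap) (N : ℕ) (w x : ℕ → ℝ≥0∞) (j : ℕ) :
    F.dmajN N w x j ≤ F.majN N (fun i => w i + x i) j := by
  unfold PSMap.dmajN PSMap.majN
  refine ENNReal.tsum_le_tsum fun p => ?_
  by_cases h : mdeg p = N
  · simp only [if_pos h]
    have hc : ∀ r : ℕ,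
        (‖F.coeff j p‖₊ : ℝ≥0∞) * ((p.1 r : ℝ≥0∞) + (p.2 r : ℝ≥0∞)) * x r *
            epow w (p.1 + p.2 - Finsupp.single r 1)
          = (‖F.coeff j p‖₊ : ℝ≥0∞) * ((((p.1 + p.2) r : ℕ) : ℝ≥0∞) * x r *
              epow w (p.1 + p.2 - Finsupp.single r 1)) := by
      intro r
      rw [Finsupp.add_apply]
      push_cast
      ring
    rw [tsum_congr hc, ENNReal.tsum_mul_left]
    exact mul_le_mul_right (key_sum_le w x (p.1 + p.2)) _
  · simp [h]

lemma dmajN_smul_x (F : PSMap) (N : ℕ) (t : ℝ≥0∞) (w x : ℕ → ℝ≥0∞) (j : ℕ) :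
    F.dmajN N w (fun i => t * x i) j = t * F.dmajN N w x j := by
  unfold PSMap.dmajN
  rw [← ENNReal.tsum_mul_left]
  refine tsum_congr fun p => ?_
  rw [← ENNReal.tsum_mul_left]
  refine tsum_congr fun r => ?_
  by_cases h : mdeg p = N
  · simp only [if_pos h]; ring
  · simp [h]

lemma dmajN_one_indep (F : PSMap) (w w' x : ℕ → ℝ≥0∞) (j : ℕ) :
    F.dmajN 1 w x j = F.dmajN 1 w' x j := by
  unfold PSMap.dmajN
  refine tsum_congr fun p => tsum_congr fun r => ?_
  by_cases h : mdeg p = 1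
  · simp only [if_pos h]
    by_cases h2 : p.1 r = 0 ∧ p.2 r = 0
    · simp [h2.1, h2.2]
    · have hγ : p.1 + p.2 - Finsupp.single r 1 = 0 := by
        have hdeg : fdeg (p.1 + p.2) = 1 := by rw [← mdeg_eq_fdeg]; exact h
        have hr : 1 ≤ (p.1 + p.2) r := by rw [Finsupp.add_apply]; omega
        ext s
        simp only [Finsupp.tsub_apply, Finsupp.sub_apply, Finsupp.coe_zero, Pi.zero_apply, Finsupp.single_apply]
        by_cases hs : r = s
        · subst hs
          have := le_fdeg (p.1 + p.2) r
          simp only [if_pos rfl, if_true]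
          omega
        · have := pair_le_fdeg (p.1 + p.2) (show r ≠ s from hs)
          simp only [hs, if_false]
          omega
      rw [hγ, epow_zero, epow_zero]
  · simp [h]

/-- If `F : h^m → h^n` is a normally analytic germ, then the differential
`(u, v) ↦ dF(u)v` is a normally analytic germ `h^m × h^m → h^n`, with the componentwise
majorant bound `(dF(|u|)|v|)̲ ≤ dF̲(|u|)|v|`. -/
theorem differential_normally_analytic (m n : ℝ) (F : PSMap) (hF : NormAnalytic m n F) :
    -- the majorant of the differential is dominated by the differential of the majorant
    (∀ (u v : ℕ → ℂ) (j : ℕ),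
      (‖F.dapp u v j‖₊ : ℝ≥0∞) ≤ F.dmaj (cabs u) (cabs v) j) ∧
    -- and the differential is normally analytic on `h^m × h^m` (linearly in `v`)
    ∃ C R : ℝ≥0∞, 0 < C ∧ C < ∞ ∧ 0 < R ∧ R < ∞ ∧
      ∀ (N : ℕ) (w x : ℕ → ℝ≥0∞),
        hnorm n (F.dmajN N w x) ≤ C * R ^ N * hnorm m w ^ (N - 1) * hnorm m x := by
  constructor
  · -- Part 1: majorant bound for the differential
    intro u v j
    refine le_trans (enorm_tsum_le _) ?_
    unfold PSMap.dmaj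
    refine ENNReal.tsum_le_tsum fun p => ?_
    refine le_trans (enorm_tsum_le _) ?_
    refine ENNReal.tsum_le_tsum fun r => ?_
    rw [nnnorm_mul, ENNReal.coe_mul]
    have hX : (‖(p.1 r : ℂ) * v r * cpow u (p.1 - Finsupp.single r 1) *
          cpow (fun i => conj (u i)) p.2‖₊ : ℝ≥0∞)
        ≤ (p.1 r : ℝ≥0∞) * cabs v r * epow (cabs u) (p.1 + p.2 - Finsupp.single r 1) := by
      by_cases h : p.1 r = 0
      · simp [h]
      · rw [nnnorm_mul, nnnorm_mul, nnnorm_mul, ENNReal.coe_mul, ENNReal.coe_mul,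
          ENNReal.coe_mul, nnnorm_cpow, nnnorm_cpow, cabs_conj]
        refine le_of_eq ?_
        rw [mul_assoc, ← epow_add, sub_single_add p.1 p.2 r h]
        have : (‖(p.1 r : ℂ)‖₊ : ℝ≥0∞) = (p.1 r : ℝ≥0∞) := by
          simp
        rw [this]
        rfl
    have hY : (‖(p.2 r : ℂ) * conj (v r) * cpow u p.1 *
          cpow (fun i => conj (u i)) (p.2 - Finsupp.single r 1)‖₊ : ℝ≥0∞)
        ≤ (p.2 r : ℝ≥0∞) * cabs v r * epow (cabs u) (p.1 + p.2 - Finsupp.single r 1) := by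
      by_cases h : p.2 r = 0
      · simp [h]
      · rw [nnnorm_mul, nnnorm_mul, nnnorm_mul, ENNReal.coe_mul, ENNReal.coe_mul,
          ENNReal.coe_mul, nnnorm_cpow, nnnorm_cpow, cabs_conj]
        refine le_of_eq ?_
        rw [mul_assoc, mul_comm (epow (cabs u) p.1), ← epow_add, sub_single_add p.2 p.1 r h,
          add_comm p.2 p.1]
        have h1 : (‖(p.2 r : ℂ)‖₊ : ℝ≥0∞) = (p.2 r : ℝ≥0∞) := by simp
        have h2 : (‖conj (v r)‖₊ : ℝ≥0∞) = cabs v r := by simp [cabs]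
        rw [h1, h2]
    calc (‖F.coeff j p‖₊ : ℝ≥0∞) * ↑‖_ + _‖₊
        ≤ (‖F.coeff j p‖₊ : ℝ≥0∞) *
            ((p.1 r : ℝ≥0∞) * cabs v r * epow (cabs u) (p.1 + p.2 - Finsupp.single r 1) +
             (p.2 r : ℝ≥0∞) * cabs v r * epow (cabs u) (p.1 + p.2 - Finsupp.single r 1)) := by
          refine mul_le_mul_right ?_ _
          refine le_trans ?_ (add_le_add hX hY)
          rw [← ENNReal.coe_add]
          exact ENNReal.coe_le_coe.2 (nnnorm_add_le _ _)
      _ = (‖F.coeff j p‖₊ : ℝ≥0∞) * ((p.1 r : ℝ≥0∞) + (p.2 r : ℝ≥0∞)) * cabs v r *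
            epow (cabs u) (p.1 + p.2 - Finsupp.single r 1) := by ring
  · -- Part 2: normal analyticity of the differential
    obtain ⟨-, C, R, hC0, hCt, hR0, hRt, hbd⟩ := hF
    have h2R0 : (0 : ℝ≥0∞) < 2 * R := ENNReal.mul_pos (by norm_num) hR0.ne'
    have h2Rt : (2 : ℝ≥0∞) * R < ⊤ := ENNReal.mul_lt_top (by norm_num) hRt
    refine ⟨C, 2 * R, hC0, hCt, h2R0, h2Rt, ?_⟩
    intro N w x
    rcases N with - | N
    · -- N = 0
      rw [hnorm_zero n _ (fun j => dmajN_N_zero F w x j)]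
      exact zero_le
    rcases Nat.eq_zero_or_pos N with rfl | hN1
    · -- N = 1 : the expression does not depend on `w`
      have he : F.dmajN 1 w x = F.dmajN 1 x x := funext fun j => dmajN_one_indep F w x x j
      have h2x : (fun i => x i + x i) = fun i => 2 * x i := funext fun i => (two_mul (x i)).symm
      calc hnorm n (F.dmajN 1 w x) = hnorm n (F.dmajN 1 x x) := by rw [he]
        _ ≤ hnorm n (F.majN 1 (fun i => x i + x i)) :=
            hnorm_mono n _ _ (fun j => dmajN_le_majN F 1 x x j)
        _ ≤ C * R ^ 1 * hnorm m (fun i => x i + x i) ^ 1 := hbd 1 _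
        _ = C * (2 * R) ^ 1 * hnorm m w ^ (1 - 1) * hnorm m x := by
            rw [pow_one, pow_one, pow_one, pow_zero, h2x, hnorm_smul]
            ring
    · -- N + 1 ≥ 2
      have hN2 : 2 ≤ N + 1 := by omega
      by_cases hx0 : hnorm m x = 0
      · rw [hnorm_zero n _ (fun j => dmajN_x_zero F (N + 1) w x j (hnorm_eq_zero m x hx0))]
        exact zero_le
      by_cases hw0 : hnorm m w = 0
      · rw [hnorm_zero n _ (fun j => dmajN_w_zero F (N + 1) w x j (hnorm_eq_zero m w hw0) hN2)]
        exact zero_le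
      by_cases hwt : hnorm m w = ⊤
      · refine le_of_le_of_eq le_top ?_ |>.trans_eq rfl
        symm
        rw [hwt, Nat.add_sub_cancel, ENNReal.top_pow (by omega : N ≠ 0)]
        rw [ENNReal.mul_top (mul_ne_zero hC0.ne' (pow_ne_zero _ h2R0.ne')),
          ENNReal.top_mul hx0]
      by_cases hxt : hnorm m x = ⊤
      · refine le_of_le_of_eq le_top ?_ |>.trans_eq rfl
        symm
        rw [hxt, ENNReal.mul_top
          (mul_ne_zero (mul_ne_zero hC0.ne' (pow_ne_zero _ h2R0.ne')) (pow_ne_zero _ hw0))]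
      -- main case : 0 < ‖w‖, ‖x‖ < ∞
      set a := hnorm m w with hadef
      set b := hnorm m x with hbdef
      set t : ℝ≥0∞ := a * b⁻¹ with htdef
      have ht0 : t ≠ 0 := mul_ne_zero hw0 (ENNReal.inv_ne_zero.mpr hxt)
      have htt : t ≠ ⊤ := ENNReal.mul_ne_top hwt (ENNReal.inv_ne_top.mpr hx0)
      rw [← ENNReal.mul_le_mul_iff_left ht0 htt]
      have h1 : hnorm n (F.dmajN (N + 1) w x) * t
          = hnorm n (F.dmajN (N + 1) w (fun i => t * x i)) := by
        have e : F.dmajN (N + 1) w (fun i => t * x i)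
            = fun j => t * F.dmajN (N + 1) w x j :=
          funext fun j => dmajN_smul_x F (N + 1) t w x j
        rw [e, hnorm_smul, mul_comm]
      rw [h1]
      have h2 : hnorm n (F.dmajN (N + 1) w (fun i => t * x i))
          ≤ C * R ^ (N + 1) * hnorm m (fun i => w i + t * x i) ^ (N + 1) :=
        le_trans (hnorm_mono n _ _ (fun j => dmajN_le_majN F (N + 1) w (fun i => t * x i) j))
          (hbd (N + 1) _)
      have h3 : hnorm m (fun i => w i + t * x i) ≤ 2 * a := by
        refine le_trans (hnorm_add_le m w (fun i => t * x i)) ?_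
        rw [hnorm_smul, htdef, mul_assoc, ENNReal.inv_mul_cancel hx0 hxt, mul_one, two_mul]
      have h4 : C * R ^ (N + 1) * hnorm m (fun i => w i + t * x i) ^ (N + 1)
          ≤ C * R ^ (N + 1) * (2 * a) ^ (N + 1) :=
        mul_le_mul_right (pow_le_pow_left' h3 _) _
      refine le_trans h2 (le_trans h4 (le_of_eq ?_))
      rw [Nat.add_sub_cancel, htdef]
      have hbb : a ^ N * b * (a * b⁻¹) = a ^ (N + 1) := by
        calc a ^ N * b * (a * b⁻¹) = a ^ N * a * (b * b⁻¹) := by ring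
          _ = a ^ (N + 1) * 1 := by rw [ENNReal.mul_inv_cancel hx0 hxt, pow_succ]
          _ = a ^ (N + 1) := mul_one _
      calc C * R ^ (N + 1) * (2 * a) ^ (N + 1)
          = C * (2 * R) ^ (N + 1) * (a ^ N * b * (a * b⁻¹)) := by rw [hbb, mul_pow, mul_pow]; ring
        _ = C * (2 * R) ^ (N + 1) * a ^ N * b * (a * b⁻¹) := by ring
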